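/- Let G = (V,E) be connected, G' = (V,E') with E ⊆ E', and e ∈ E. The inequality 0 ≤ x_e defines a facet of the lifted multicut polytope Ξ_{GG'} if and only if e is not contained in any triangle of G'. -/

import Mathlib

open SimpleGraph

variable {V : Type}

section Defs

variable [Fintype V] [DecidableEq V]

/-- A decomposition of a graph `G`: a partition of the vertex set into
blocks each of which induces a connected subgraph of `G`. -/
def IsDecomposition (G : SimpleGraph V) (P : Set (Set V)) : Prop :=
  (∀ U ∈ P, ∀ W ∈ P, U ≠ W → Disjoint U W) ∧
  (∀ v : V, ∃ U ∈ P, v ∈ U) ∧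
  (∀ U ∈ P, (G.induce U).Connected)

/-- An edge `e` straddles distinct blocks of `P` if no block contains both endpoints. -/
def Straddles (P : Set (Set V)) (e : Sym2 V) : Prop := ∀ U ∈ P, ¬ ∀ v ∈ e, v ∈ U

/-- The set of edges of `G` straddling distinct blocks of `P` (the map `φ_G`). -/
def cutEdges (G : SimpleGraph V) (P : Set (Set V)) : Set (Sym2 V) :=
  {e | e ∈ G.edgeSet ∧ Straddles P e}

/-- A multicut of `G`: a set of edges meeting every cycle of `G` in a number of
edges different from 1. -/
def IsMulticut (G : SimpleGraph V) (M : Set (Sym2 V)) : Prop :=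
  M ⊆ G.edgeSet ∧ ∀ ⦃u : V⦄ (c : G.Walk u u), c.IsCycle →
    (M ∩ {e | e ∈ c.edges}).ncard ≠ 1

/-- A multicut of `G'` lifted from `G`. -/
def IsLiftedMulticut (G G' : SimpleGraph V) (M : Set (Sym2 V)) : Prop :=
  ∃ P : Set (Set V), IsDecomposition G P ∧ M = cutEdges G' P

/-- The closed walk `c` has a chord in the graph `H`: an edge of `H` joining two
vertices of `c` that is not an edge of `c`. -/
def HasChord (H : SimpleGraph V) {G : SimpleGraph V} {u : V} (c : G.Walk u u) : Prop :=
  ∃ e ∈ H.edgeSet, (∀ v ∈ e, v ∈ c.support) ∧ e ∉ c.edges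

/-- A `vw`-cut of `G`: a minimal set of edges whose removal disconnects `v` from `w`. -/
def IsCut (G : SimpleGraph V) (v w : V) (C : Finset (Sym2 V)) : Prop :=
  ↑C ⊆ G.edgeSet ∧ ¬ (G.deleteEdges ↑C).Reachable v w ∧
    ∀ C' : Finset (Sym2 V), C' ⊂ C → (G.deleteEdges ↑C').Reachable v w

/-- The cycle inequalities for cycles of `G`. -/
def CycleIneqs (G : SimpleGraph V) (x : Sym2 V → ℕ) : Prop :=
  ∀ ⦃u : V⦄ (c : G.Walk u u), c.IsCycle → ∀ e ∈ c.edges,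
    x e ≤ ∑ e' ∈ c.edges.toFinset.erase e, x e'

/-- The path inequalities for pairs `vw ∈ E' \ E` and `vw`-paths of `G`. -/
def PathIneqs (G G' : SimpleGraph V) (x : Sym2 V → ℕ) : Prop :=
  ∀ v w : V, s(v, w) ∈ G'.edgeSet \ G.edgeSet →
    ∀ p : G.Walk v w, p.IsPath → x s(v, w) ≤ ∑ e ∈ p.edges.toFinset, x e

/-- The cut inequalities for pairs `vw ∈ E' \ E` and `vw`-cuts of `G`. -/
def CutIneqs (G G' : SimpleGraph V) (x : Sym2 V → ℕ) : Prop :=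
  ∀ v w : V, s(v, w) ∈ G'.edgeSet \ G.edgeSet →
    ∀ C : Finset (Sym2 V), IsCut G v w C → 1 - x s(v, w) ≤ ∑ e ∈ C, (1 - x e)

/-- Characteristic vector of an edge set, in `ℝ^{Sym2 V}`. -/
noncomputable def charVec (M : Set (Sym2 V)) : Sym2 V → ℝ :=
  fun e => by classical exact if e ∈ M then 1 else 0

/-- The characteristic vectors of multicuts of `G'` lifted from `G`
(the vertex set of the lifted multicut polytope `Ξ_{GG'}`). -/
def liftedVectors (G G' : SimpleGraph V) : Set (Sym2 V → ℝ) :=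
  {x | ∃ M : Set (Sym2 V), IsLiftedMulticut G G' M ∧ x = charVec M}

/-- The characteristic vectors of multicuts of `G'`. -/
def multicutVectors (G' : SimpleGraph V) : Set (Sym2 V → ℝ) :=
  {x | ∃ M : Set (Sym2 V), IsMulticut G' M ∧ x = charVec M}

/-- The inequality `ineq`, with associated equality `eqn`, defines a facet of the
lifted multicut polytope `Ξ_{GG'}` (which has dimension `|E'|`): it is valid, and
the face it induces has dimension `|E'| - 1`. -/
def DefinesFacet (G G' : SimpleGraph V) (ineq eqn : (Sym2 V → ℝ) → Prop) : Prop :=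
  (∀ x ∈ liftedVectors G G', ineq x) ∧
  Module.finrank ℝ (vectorSpan ℝ {x ∈ liftedVectors G G' | eqn x}) = G'.edgeSet.ncard - 1

/-- Facet-defining for the multicut polytope `Ξ_{G'}`. -/
def DefinesFacetMC (G' : SimpleGraph V) (ineq eqn : (Sym2 V → ℝ) → Prop) : Prop :=
  (∀ x ∈ multicutVectors G', ineq x) ∧
  Module.finrank ℝ (vectorSpan ℝ {x ∈ multicutVectors G' | eqn x}) = G'.edgeSet.ncard - 1

/-- `u` is a `v`-`w`-cut-vertex: it lies on every `vw`-path of `G`. -/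
def IsCutVertex (G : SimpleGraph V) (v w u : V) : Prop :=
  ∀ p : G.Walk v w, p.IsPath → u ∈ p.support

/-- `S` is a `u`-`v`-separating node set of `G`. -/
def IsSeparatingSet (G : SimpleGraph V) (u v : V) (S : Set V) : Prop :=
  u ∉ S ∧ v ∉ S ∧ ∀ p : G.Walk u v, p.IsPath → ∃ s ∈ S, s ∈ p.support

/-- The side of the cut `C` containing `v`. -/
def vSide (G : SimpleGraph V) (C : Finset (Sym2 V)) (v : V) : Set V :=
  {u | (G.deleteEdges ↑C).Reachable v u}

/-- The component of `G` induced by `U` is properly `(vw,C)`-connected. -/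
def ProperlyConnected (G : SimpleGraph V) (v w : V) (C : Finset (Sym2 V)) (U : Set V) : Prop :=
  (G.induce U).Connected ∧ v ∈ U ∧ w ∈ U ∧
    ({e | e ∈ C ∧ ∀ u ∈ e, u ∈ U} : Set (Sym2 V)).ncard = 1

/-- The component of `G` induced by `U` is improperly `(vw,C)`-connected. -/
def ImproperlyConnected (G : SimpleGraph V) (v w : V) (C : Finset (Sym2 V)) (U : Set V) : Prop :=
  (G.induce U).Connected ∧ (U ⊆ vSide G C v ∨ U ⊆ vSide G C w)

/-- `(vw,C)`-connected: properly or improperly so. -/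
def VWCConnected (G : SimpleGraph V) (v w : V) (C : Finset (Sym2 V)) (U : Set V) : Prop :=
  ProperlyConnected G v w C U ∨ ImproperlyConnected G v w C U

/-- The vertex set of the maximal component of `H` containing `u`. -/
def compSupp (H : SimpleGraph V) (u : V) : Set V := {u' | H.Reachable u u'}

end Defs

section AuxLemmas
set_option linter.unusedVariables false
set_option linter.unusedSectionVars false


lemma walk_induce_reachable {G : SimpleGraph V} {S : Set V} :
    ∀ {c d : V} (q : G.Walk c d), (∀ z ∈ q.support, z ∈ S) → ∀ (hc : c ∈ S) (hd : d ∈ S),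
      (G.induce S).Reachable ⟨c, hc⟩ ⟨d, hd⟩ := by
  intro c d q
  induction q with
  | nil => intro _ hc hd; rfl
  | @cons a b d h p ih =>
    intro hq hc hd
    have hb : b ∈ S := hq _ (by simp)
    have : (G.induce S).Adj ⟨a, hc⟩ ⟨b, hb⟩ := by simpa using h
    exact this.reachable.trans (ih (fun z hz => hq z (by simp [hz])) hb hd)

lemma induce_walk_exists {G : SimpleGraph V} {S : Set V} :
    ∀ {x y : ↥S} (p : (G.induce S).Walk x y), ∃ q : G.Walk x.1 y.1, ∀ z ∈ q.support, z ∈ S := by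
  intro x y p
  induction p with
  | nil => exact ⟨.nil, by simp⟩
  | @cons a b c h p ih =>
    obtain ⟨q, hq⟩ := ih
    have hab : G.Adj a.1 b.1 := by simpa using h
    refine ⟨.cons hab q, ?_⟩
    intro z hz
    rcases List.mem_cons.mp (by simpa using hz) with h1 | h2
    · exact h1 ▸ a.2
    · exact hq z h2

lemma induce_connected_iff {G : SimpleGraph V} {S : Set V} :
    (G.induce S).Connected ↔ S.Nonempty ∧ ∀ x ∈ S, ∀ y ∈ S, ∃ q : G.Walk x y, ∀ z ∈ q.support, z ∈ S := by
  constructor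
  · intro h
    have hne : S.Nonempty := by
      obtain ⟨⟨x, hx⟩⟩ := h.nonempty
      exact ⟨x, hx⟩
    refine ⟨hne, fun x hx y hy => ?_⟩
    obtain ⟨p⟩ := h.preconnected ⟨x, hx⟩ ⟨y, hy⟩
    exact induce_walk_exists p
  · rintro ⟨⟨x0, hx0⟩, h⟩
    have : Nonempty ↥S := ⟨⟨x0, hx0⟩⟩
    refine ⟨fun a b => ?_⟩
    obtain ⟨q, hq⟩ := h a.1 a.2 b.1 b.2
    simpa using walk_induce_reachable q hq a.2 b.2



lemma conn_singleton (G : SimpleGraph V) (w : V) : (G.induce {w}).Connected := by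
  rw [induce_connected_iff]
  refine ⟨⟨w, rfl⟩, ?_⟩
  rintro x rfl y rfl
  exact ⟨.nil, by simp⟩

lemma conn_insert_adj {G : SimpleGraph V} {S : Set V} {n w : V} (hS : (G.induce S).Connected)
    (hw : w ∈ S) (hadj : G.Adj n w) : (G.induce (insert n S)).Connected := by
  rw [induce_connected_iff] at hS ⊢
  obtain ⟨hne, h⟩ := hS
  refine ⟨⟨w, Set.mem_insert_of_mem _ hw⟩, ?_⟩
  have key : ∀ y ∈ S, ∃ q : G.Walk n y, ∀ z ∈ q.support, z ∈ insert n S := by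
    intro y hy
    obtain ⟨q, hq⟩ := h w hw y hy
    exact ⟨.cons hadj q, by
      intro z hz
      rcases List.mem_cons.mp (by simpa using hz) with h1 | h2
      · exact h1 ▸ Set.mem_insert _ _
      · exact Set.mem_insert_of_mem _ (hq z h2)⟩
  rintro x (rfl | hx) y (rfl | hy)
  · exact ⟨.nil, by simp⟩
  · exact key y hy
  · obtain ⟨q, hq⟩ := key x hx
    exact ⟨q.reverse, by simpa using hq⟩
  · obtain ⟨q, hq⟩ := h x hx y hy
    exact ⟨q, fun z hz => Set.mem_insert_of_mem _ (hq z hz)⟩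

lemma conn_support {G : SimpleGraph V} {c d : V} [DecidableEq V] (q : G.Walk c d) :
    (G.induce {z | z ∈ q.support}).Connected := by
  rw [induce_connected_iff]
  refine ⟨⟨c, q.start_mem_support⟩, ?_⟩
  have key : ∀ x ∈ q.support, ∃ r : G.Walk c x, ∀ z ∈ r.support, z ∈ q.support := by
    intro x hx
    exact ⟨q.takeUntil x hx, fun z hz => q.support_takeUntil_subset hx hz⟩
  intro x hx y hy
  obtain ⟨r1, h1⟩ := key x hx
  obtain ⟨r2, h2⟩ := key y hy
  refine ⟨r1.reverse.append r2, ?_⟩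
  intro z hz
  rcases (Walk.mem_support_append_iff _ _).mp hz with h | h
  · exact h1 z (by simpa using h)
  · exact h2 z h



lemma notmem_dropUntil_support {G : SimpleGraph V} [DecidableEq V] {x y a : V} {q : G.Walk x y}
    (hq : q.IsPath) (ha : a ∈ q.support) (hax : a ≠ x) : x ∉ (q.dropUntil a ha).support := by
  have hsup : q.support = (q.takeUntil a ha).support ++ (q.dropUntil a ha).support.tail := by
    rw [← Walk.support_append, q.take_spec ha]
  have hnd := hq.support_nodup
  rw [hsup, List.nodup_append] at hnd
  intro hx
  rw [Walk.support_eq_cons] at hx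
  rcases List.mem_cons.mp hx with h1 | h2
  · exact hax h1.symm
  · exact hnd.2.2 x (q.takeUntil a ha).start_mem_support x h2 rfl

lemma minimal_pair_eq {G : SimpleGraph V} [DecidableEq V] {S : Set V} {a b x y : V}
    (hconn : (G.induce S).Connected)
    (ha : a ∈ S) (hb : b ∈ S) (hab : a ≠ b) (hxy : x ≠ y) (hx : x ∈ S) (hy : y ∈ S)
    (hminab : ∀ T, T ⊆ S → (G.induce T).Connected → a ∈ T → b ∈ T → T = S)
    (hminxy : ∀ T, T ⊆ S → (G.induce T).Connected → x ∈ T → y ∈ T → T = S) :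
    ({x, y} : Set V) = ({a, b} : Set V) := by
  classical
  -- get a path from x to y whose support is S
  obtain ⟨-, hchar⟩ := induce_connected_iff.mp hconn
  obtain ⟨q0, hq0⟩ := hchar x hx y hy
  set p : G.Walk x y := (q0.toPath : G.Path x y).val with hpdef
  have hp : p.IsPath := (q0.toPath).2
  have hpsub : ∀ z ∈ p.support, z ∈ S := fun z hz => hq0 z (q0.support_toPath_subset hz)
  have hTS : {z | z ∈ p.support} = S :=
    hminxy _ hpsub (conn_support p) p.start_mem_support p.end_mem_support
  -- inner argument
  have inner : ∀ {x' y' : V} (r : G.Walk x' y'), r.IsPath → (∀ z ∈ r.support, z ∈ S) →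
      ({z | z ∈ r.support} = S) → x' ≠ a → x' ≠ b → False := by
    intro x' y' r hr hrsub hrS hxa hxb
    have ha' : a ∈ r.support := by rw [Set.ext_iff] at hrS; exact (hrS a).mpr ha
    by_cases hbd : b ∈ (r.dropUntil a ha').support
    · set w := (r.dropUntil a ha').takeUntil b hbd with hw
      have hws : ∀ z ∈ w.support, z ∈ (r.dropUntil a ha').support :=
        fun z hz => (r.dropUntil a ha').support_takeUntil_subset hbd hz
      have hT := hminab {z | z ∈ w.support}
        (fun z hz => hrsub z (r.support_dropUntil_subset ha' (hws z hz)))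
        (conn_support w) w.start_mem_support w.end_mem_support
      have : x' ∈ {z | z ∈ w.support} := by rw [hT]; exact hrsub x' r.start_mem_support
      exact notmem_dropUntil_support hr ha' (Ne.symm hxa) (hws x' this)
    · have hbt : b ∈ (r.takeUntil a ha').support := by
        have hsup : r.support = (r.takeUntil a ha').support ++ (r.dropUntil a ha').support.tail := by
          rw [← Walk.support_append, r.take_spec ha']
        have hbr : b ∈ r.support := by rw [Set.ext_iff] at hrS; exact (hrS b).mpr hb
        rw [hsup] at hbr
        rcases List.mem_append.mp hbr with h | h
        · exact h
        · exact absurd (List.mem_of_mem_tail h) hbd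
      set r1 := r.takeUntil a ha' with hr1
      have hr1p : r1.IsPath := hr.takeUntil ha'
      set w := r1.dropUntil b hbt with hw
      have hws : ∀ z ∈ w.support, z ∈ r1.support :=
        fun z hz => r1.support_dropUntil_subset hbt hz
      have hT := hminab {z | z ∈ w.support}
        (fun z hz => hrsub z (r.support_takeUntil_subset ha' (hws z hz)))
        (conn_support w) (by rw [hw]; exact Walk.end_mem_support _) (Walk.start_mem_support _)
      have : x' ∈ {z | z ∈ w.support} := by rw [hT]; exact hrsub x' r.start_mem_support
      exact notmem_dropUntil_support hr1p hbt (Ne.symm hxb) this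
  by_contra hne
  have hcase : (x ≠ a ∧ x ≠ b) ∨ (y ≠ a ∧ y ≠ b) := by
    by_contra hc
    push_neg at hc
    obtain ⟨h1, h2⟩ := hc
    apply hne
    by_cases hxa : x = a
    · have hyb : y = b := by
        by_cases hyA : y = a
        · exact absurd (hxa.trans hyA.symm) hxy
        · exact h2 hyA
      rw [hxa, hyb]
    · have hxb := h1 hxa
      have hya : y = a := by
        by_cases hyb : y = b
        · exact absurd (hxb.trans hyb.symm) hxy
        · by_cases hyA : y = a
          · exact hyA
          · exact absurd (h2 hyA) hyb
      rw [hxb, hya, Set.pair_comm]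
  rcases hcase with ⟨h1, h2⟩ | ⟨h1, h2⟩
  · exact absurd (inner p hp hpsub hTS h1 h2) not_false
  · refine absurd (inner p.reverse (hp.reverse) (by simpa using hpsub) ?_ h1 h2) not_false
    rw [← hTS]; ext z; simp



/-- measure of a block relative to `W = {u,v}`. -/
noncomputable def muW (W S : Set V) : ℕ := 3 * (S ∪ W).ncard + (S ∩ W).ncard

/-- candidate values for the Steiner-type minimum. -/
def steinerSet (G : SimpleGraph V) (W : Set V) (g : Sym2 V) : Set ℕ :=
  {n | ∃ S : Set V, (G.induce S).Connected ∧ (∀ z ∈ g, z ∈ S) ∧ n = muW W S}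

noncomputable def steiner (G : SimpleGraph V) (W : Set V) (g : Sym2 V) : ℕ :=
  sInf (steinerSet G W g)

lemma pair_eq_sym2 {x y a b : V} (hxy : x ≠ y) (h : ({x, y} : Set V) = ({a, b} : Set V)) :
    s(x, y) = s(a, b) := by
  have hx : x = a ∨ x = b := by
    have : x ∈ ({a, b} : Set V) := h ▸ Set.mem_insert _ _
    simpa using this
  have hy : y = a ∨ y = b := by
    have : y ∈ ({a, b} : Set V) := h ▸ Set.mem_insert_of_mem _ rfl
    simpa using this
  rcases hx with rfl | rfl <;> rcases hy with rfl | rfl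
  · exact absurd rfl hxy
  · rfl
  · exact Sym2.eq_swap
  · exact absurd rfl hxy

lemma mu_tri [Fintype V] {W S T : Set V} (hW : W.ncard ≤ 2) (h : T ⊆ S) :
    T = S ∨ muW W T < muW W S := by
  classical
  have hfin : (S ∪ W).Finite := Set.toFinite _
  have hk : (T ∪ W).ncard ≤ (S ∪ W).ncard :=
    Set.ncard_le_ncard (Set.union_subset_union_left _ h) hfin
  have htl : (T ∩ W).ncard ≤ 2 :=
    le_trans (Set.ncard_le_ncard Set.inter_subset_right (Set.toFinite _)) hW
  rcases lt_or_eq_of_le hk with hk | hk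
  · right
    unfold muW
    have : 3 * (T ∪ W).ncard + (T ∩ W).ncard ≤ 3 * (T ∪ W).ncard + 2 := by omega
    omega
  · have hUeq : T ∪ W = S ∪ W :=
      Set.eq_of_subset_of_ncard_le (Set.union_subset_union_left _ h) (le_of_eq hk.symm) hfin
    have ht : (T ∩ W).ncard ≤ (S ∩ W).ncard :=
      Set.ncard_le_ncard (Set.inter_subset_inter_left _ h) (Set.toFinite _)
    rcases lt_or_eq_of_le ht with ht | ht
    · right; unfold muW; omega
    · left
      have hIeq : T ∩ W = S ∩ W :=
        Set.eq_of_subset_of_ncard_le (Set.inter_subset_inter_left _ h) (le_of_eq ht.symm)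
          (Set.toFinite _)
      ext z
      constructor
      · exact fun hz => h hz
      · intro hz
        have : z ∈ T ∪ W := hUeq.symm ▸ Set.mem_union_left _ hz
        rcases this with hT | hW'
        · exact hT
        · have : z ∈ T ∩ W := hIeq.symm ▸ ⟨hz, hW'⟩
          exact this.1

lemma mu_tri' [Fintype V] {W S T : Set V} (h : T ⊆ S) :
    T = S ∨ (T ∪ W).ncard < (S ∪ W).ncard ∨
      ((T ∪ W).ncard = (S ∪ W).ncard ∧ (T ∩ W).ncard < (S ∩ W).ncard) := by
  classical
  have hfin : (S ∪ W).Finite := Set.toFinite _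
  have hk : (T ∪ W).ncard ≤ (S ∪ W).ncard :=
    Set.ncard_le_ncard (Set.union_subset_union_left _ h) hfin
  rcases lt_or_eq_of_le hk with hk | hk
  · exact Or.inr (Or.inl hk)
  · have hUeq : T ∪ W = S ∪ W :=
      Set.eq_of_subset_of_ncard_le (Set.union_subset_union_left _ h) (le_of_eq hk.symm) hfin
    have ht : (T ∩ W).ncard ≤ (S ∩ W).ncard :=
      Set.ncard_le_ncard (Set.inter_subset_inter_left _ h) (Set.toFinite _)
    rcases lt_or_eq_of_le ht with ht | ht
    · exact Or.inr (Or.inr ⟨hk, ht⟩)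
    · left
      have hIeq : T ∩ W = S ∩ W :=
        Set.eq_of_subset_of_ncard_le (Set.inter_subset_inter_left _ h) (le_of_eq ht.symm)
          (Set.toFinite _)
      ext z
      refine ⟨fun hz => h hz, fun hz => ?_⟩
      have : z ∈ T ∪ W := hUeq.symm ▸ Set.mem_union_left _ hz
      rcases this with hT | hW'
      · exact hT
      · have : z ∈ T ∩ W := by rw [hIeq]; exact ⟨hz, hW'⟩
        exact this.1

lemma sym2_mem_sub {a b : V} {S : Set V} : (∀ z ∈ s(a,b), z ∈ S) ↔ a ∈ S ∧ b ∈ S := by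
  constructor
  · intro h
    exact ⟨h a (by simp), h b (by simp)⟩
  · rintro ⟨h1, h2⟩ z hz
    rcases Sym2.mem_iff.mp hz with rfl | rfl
    · exact h1
    · exact h2

lemma decrease_A [Fintype V] [DecidableEq V] {G : SimpleGraph V} {W S : Set V} {a b x y : V}
    (hW : W.ncard ≤ 2) (hconn : (G.induce S).Connected)
    (ha : a ∈ S) (hb : b ∈ S) (hab : a ≠ b)
    (hgmin : steiner G W s(a,b) = muW W S)
    (hx : x ∈ S) (hy : y ∈ S) (hxy : x ≠ y) (hne : s(x,y) ≠ s(a,b)) :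
    steiner G W s(x,y) < steiner G W s(a,b) := by
  classical
  set N : Set ℕ := {n | ∃ T : Set V, T ⊆ S ∧ (G.induce T).Connected ∧ x ∈ T ∧ y ∈ T ∧ n = muW W T}
    with hN
  have hSN : muW W S ∈ N := ⟨S, le_refl _, hconn, hx, hy, rfl⟩
  obtain ⟨T0, hT0S, hT0conn, hxT0, hyT0, hT0mu⟩ := Nat.sInf_mem (⟨_, hSN⟩ : N.Nonempty)
  have hle : steiner G W s(x,y) ≤ muW W T0 :=
    Nat.sInf_le ⟨T0, hT0conn, sym2_mem_sub.mpr ⟨hxT0, hyT0⟩, rfl⟩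
  rcases mu_tri hW hT0S with heq | hlt
  · -- T0 = S : derive contradiction via minimal_pair_eq + no-triangle is not needed here;
    -- here we get {x,y} = {a,b} hence s(x,y) = s(a,b), contradiction
    exfalso
    have hminxy : ∀ T, T ⊆ S → (G.induce T).Connected → x ∈ T → y ∈ T → T = S := by
      intro T hTS hTconn hxT hyT
      rcases mu_tri hW hTS with h | h
      · exact h
      · exfalso
        have : sInf N ≤ muW W T := Nat.sInf_le ⟨T, hTS, hTconn, hxT, hyT, rfl⟩
        rw [hT0mu, heq] at this
        omega
    have hminab : ∀ T, T ⊆ S → (G.induce T).Connected → a ∈ T → b ∈ T → T = S := by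
      intro T hTS hTconn haT hbT
      rcases mu_tri hW hTS with h | h
      · exact h
      · exfalso
        have : steiner G W s(a,b) ≤ muW W T :=
          Nat.sInf_le ⟨T, hTconn, sym2_mem_sub.mpr ⟨haT, hbT⟩, rfl⟩
        rw [hgmin] at this
        omega
    exact hne (pair_eq_sym2 hxy (minimal_pair_eq hconn ha hb hab hxy hx hy hminab hminxy))
  · rw [hgmin]
    exact lt_of_le_of_lt hle hlt

lemma decrease_B [Fintype V] [DecidableEq V] {G G' : SimpleGraph V} {u v : V} {S : Set V}
    {a b x : V}
    (huv : G.Adj u v) (hnt : ∀ t, ¬ (G'.Adj u t ∧ G'.Adj v t))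
    (hconn : (G.induce S).Connected) (hUS : u ∉ S) (hvS : v ∈ S)
    (ha : a ∈ S) (hb : b ∈ S) (hab : a ≠ b)
    (hgmin : steiner G {u,v} s(a,b) = muW {u,v} S)
    (hgE : s(a,b) ∈ G'.edgeSet) (hx : x ∈ S) (hxv : x ≠ v) (hhE : s(u,x) ∈ G'.edgeSet) :
    steiner G {u,v} s(u,x) < steiner G {u,v} s(a,b) := by
  classical
  set W : Set V := {u, v} with hWdef
  have huvne : u ≠ v := G.ne_of_adj huv
  have hW : W.ncard ≤ 2 := le_of_eq (Set.ncard_pair huvne)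
  set N : Set ℕ := {n | ∃ T : Set V, T ⊆ S ∧ (G.induce T).Connected ∧ v ∈ T ∧ x ∈ T ∧ n = muW W T}
    with hN
  have hSN : muW W S ∈ N := ⟨S, le_refl _, hconn, hvS, hx, rfl⟩
  obtain ⟨T0, hT0S, hT0conn, hvT0, hxT0, hT0mu⟩ := Nat.sInf_mem (⟨_, hSN⟩ : N.Nonempty)
  set T1 : Set V := insert u T0 with hT1def
  have hT1conn : (G.induce T1).Connected := conn_insert_adj hT0conn hvT0 huv
  have huT0 : u ∉ T0 := fun h => hUS (hT0S h)
  have hle : steiner G W s(u,x) ≤ muW W T1 :=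
    Nat.sInf_le ⟨T1, hT1conn, sym2_mem_sub.mpr ⟨Set.mem_insert _ _,
      Set.mem_insert_of_mem _ hxT0⟩, rfl⟩
  have hT1U : T1 ∪ W = T0 ∪ W := by
    ext z
    simp only [hT1def, hWdef, Set.mem_union, Set.mem_insert_iff, Set.mem_singleton_iff]
    tauto
  have hT1I : T1 ∩ W = insert u (T0 ∩ W) := by
    ext z
    simp only [hT1def, hWdef, Set.mem_inter_iff, Set.mem_union, Set.mem_insert_iff,
      Set.mem_singleton_iff]
    tauto
  have hT1Icard : (T1 ∩ W).ncard = (T0 ∩ W).ncard + 1 := by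
    rw [hT1I]
    exact Set.ncard_insert_of_notMem (fun h => huT0 h.1) (Set.toFinite _)
  have hmuT1 : muW W T1 = 3 * (T0 ∪ W).ncard + (T0 ∩ W).ncard + 1 := by
    unfold muW
    rw [hT1U, hT1Icard]
    omega
  have htSW : S ∩ W = {v} := by
    ext z
    simp only [hWdef, Set.mem_inter_iff, Set.mem_insert_iff, Set.mem_singleton_iff]
    constructor
    · rintro ⟨hzS, rfl | rfl⟩
      · exact absurd hzS hUS
      · rfl
    · rintro rfl
      exact ⟨hvS, Or.inr rfl⟩
  have htScard : (S ∩ W).ncard = 1 := by rw [htSW]; exact Set.ncard_singleton _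
  rcases mu_tri' (W := W) hT0S with heq | hk | ⟨hkeq, ht⟩
  · -- T0 = S : triangle contradiction
    exfalso
    have hminvx : ∀ T, T ⊆ S → (G.induce T).Connected → v ∈ T → x ∈ T → T = S := by
      intro T hTS hTconn hvT hxT
      rcases mu_tri hW hTS with h | h
      · exact h
      · exfalso
        have : sInf N ≤ muW W T := Nat.sInf_le ⟨T, hTS, hTconn, hvT, hxT, rfl⟩
        rw [hT0mu, heq] at this
        omega
    have hminab : ∀ T, T ⊆ S → (G.induce T).Connected → a ∈ T → b ∈ T → T = S := by
      intro T hTS hTconn haT hbT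
      rcases mu_tri hW hTS with h | h
      · exact h
      · exfalso
        have : steiner G W s(a,b) ≤ muW W T :=
          Nat.sInf_le ⟨T, hTconn, sym2_mem_sub.mpr ⟨haT, hbT⟩, rfl⟩
        rw [hgmin] at this
        omega
    have hpair : ({v, x} : Set V) = ({a, b} : Set V) :=
      minimal_pair_eq hconn ha hb hab (Ne.symm hxv) hvS hx hminab hminvx
    have hvx : s(v,x) = s(a,b) := pair_eq_sym2 (Ne.symm hxv) hpair
    have hAdjvx : G'.Adj v x := by
      have : s(v,x) ∈ G'.edgeSet := by rw [hvx]; exact hgE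
      exact (G'.mem_edgeSet).mp this
    exact hnt x ⟨(G'.mem_edgeSet).mp hhE, hAdjvx⟩
  · -- (T0 ∪ W).ncard < (S ∪ W).ncard
    have htT0 : (T0 ∩ W).ncard ≤ 2 :=
      le_trans (Set.ncard_le_ncard Set.inter_subset_right (Set.toFinite _)) hW
    rw [hgmin]
    unfold muW
    rw [hmuT1] at hle
    calc steiner G W s(u,x) ≤ 3 * (T0 ∪ W).ncard + (T0 ∩ W).ncard + 1 := hle
    _ < 3 * (S ∪ W).ncard + (S ∩ W).ncard := by omega
  · -- (T0 ∩ W).ncard < (S ∩ W).ncard : impossible since v ∈ T0 ∩ W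
    exfalso
    have : 1 ≤ (T0 ∩ W).ncard := by
      have : v ∈ T0 ∩ W := ⟨hvT0, Or.inr rfl⟩
      have := Set.ncard_pos (Set.toFinite (T0 ∩ W)) |>.mpr ⟨v, this⟩
      omega
    omega



section Blocks
variable [Fintype V] [DecidableEq V]

/-- blocks `C` together with singletons of uncovered vertices. -/
def blocksP (C : Set (Set V)) : Set (Set V) := C ∪ {T | ∃ w, w ∉ ⋃₀ C ∧ T = {w}}

lemma isDecomposition_blocksP (G : SimpleGraph V) (C : Set (Set V))
    (hdisj : ∀ U ∈ C, ∀ W ∈ C, U ≠ W → Disjoint U W)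
    (hconn : ∀ U ∈ C, (G.induce U).Connected) :
    IsDecomposition G (blocksP C) := by
  refine ⟨?_, ?_, ?_⟩
  · rintro U hU W hW hUW
    rcases hU with hU | ⟨w, hw, rfl⟩ <;> rcases hW with hW | ⟨w', hw', rfl⟩
    · exact hdisj U hU W hW hUW
    · exact Set.disjoint_singleton_right.mpr (fun h => hw' ⟨U, hU, h⟩)
    · exact Set.disjoint_singleton_left.mpr (fun h => hw ⟨W, hW, h⟩)
    · refine Set.disjoint_singleton_left.mpr ?_
      intro h
      exact hUW (by rw [Set.mem_singleton_iff.mp h])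
  · intro v
    by_cases h : ∃ U ∈ C, v ∈ U
    · obtain ⟨U, hU, hv⟩ := h
      exact ⟨U, Or.inl hU, hv⟩
    · refine ⟨{v}, Or.inr ⟨v, ?_, rfl⟩, rfl⟩
      intro hv
      obtain ⟨U, hU, hvU⟩ := hv
      exact h ⟨U, hU, hvU⟩
  · rintro U (hU | ⟨w, hw, rfl⟩)
    · exact hconn U hU
    · exact conn_singleton G w

lemma mem_cutEdges_blocksP (G' : SimpleGraph V) (C : Set (Set V)) (g : Sym2 V) :
    g ∈ cutEdges G' (blocksP C) ↔ g ∈ G'.edgeSet ∧ ∀ U ∈ C, ¬ ∀ z ∈ g, z ∈ U := by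
  constructor
  · rintro ⟨hgE, hstr⟩
    exact ⟨hgE, fun U hU => hstr U (Or.inl hU)⟩
  · rintro ⟨hgE, h⟩
    refine ⟨hgE, ?_⟩
    rintro U (hU | ⟨w, hw, rfl⟩)
    · exact h U hU
    · intro hall
      induction g using Sym2.ind with
      | _ a b =>
        have hnd : a ≠ b := (G'.ne_of_adj (G'.mem_edgeSet.mp hgE))
        have ha : a = w := hall a (by simp)
        have hb : b = w := hall b (by simp)
        exact hnd (ha.trans hb.symm)

lemma charVec_apply (M : Set (Sym2 V)) (g : Sym2 V) [Decidable (g ∈ M)] :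
    charVec M g = if g ∈ M then 1 else 0 := by
  by_cases h : g ∈ M <;> simp [charVec, h]

lemma ends_pair_iff {G' : SimpleGraph V} {u v : V} {w : Sym2 V} (hw : w ∈ G'.edgeSet) :
    (∀ z ∈ w, z ∈ ({u, v} : Set V)) ↔ w = s(u, v) := by
  constructor
  · intro h
    induction w using Sym2.ind with
    | _ a b =>
      have hnd : a ≠ b := G'.ne_of_adj (G'.mem_edgeSet.mp hw)
      have ha : a = u ∨ a = v := by simpa using h a (by simp)
      have hb : b = u ∨ b = v := by simpa using h b (by simp)
      rcases ha with rfl | rfl <;> rcases hb with rfl | rfl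
      · exact absurd rfl hnd
      · rfl
      · exact Sym2.eq_swap
      · exact absurd rfl hnd
  · rintro rfl z hz
    rcases Sym2.mem_iff.mp hz with rfl | rfl
    · exact Set.mem_insert _ _
    · exact Set.mem_insert_of_mem _ rfl

lemma sum_single_apply (T : Finset (Sym2 V)) (w : Sym2 V) :
    (∑ h ∈ T, Pi.single h (1:ℝ)) w = if w ∈ T then 1 else 0 := by
  classical
  rw [Finset.sum_apply]
  have : ∀ h ∈ T, (Pi.single h (1:ℝ) : Sym2 V → ℝ) w = if h = w then (1:ℝ) else (0:ℝ) := by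
    intro h _
    rw [Pi.single_apply]
    rcases eq_or_ne w h with rfl | hh
    · simp
    · rw [if_neg hh, if_neg (Ne.symm hh)]
  rw [Finset.sum_congr rfl this, Finset.sum_ite_eq' T w (fun _ => (1:ℝ))]

end Blocks


section Main
variable [Fintype V] [DecidableEq V]

lemma conn_pair {G : SimpleGraph V} {u v : V} (huv : G.Adj u v) :
    (G.induce ({u, v} : Set V)).Connected :=
  conn_insert_adj (conn_singleton G v) rfl huv

lemma face_mem {G G' : SimpleGraph V} (C : Set (Set V))
    (hdisj : ∀ U ∈ C, ∀ W ∈ C, U ≠ W → Disjoint U W)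
    (hconn : ∀ U ∈ C, (G.induce U).Connected) {u v : V}
    (hBuv : ∃ U ∈ C, u ∈ U ∧ v ∈ U) :
    charVec (cutEdges G' (blocksP C)) ∈ {x ∈ liftedVectors G G' | x s(u,v) = 0} := by
  classical
  refine ⟨⟨cutEdges G' (blocksP C), ⟨blocksP C, isDecomposition_blocksP G C hdisj hconn, rfl⟩,
    rfl⟩, ?_⟩
  obtain ⟨U, hU, huU, hvU⟩ := hBuv
  have hnot : s(u,v) ∉ cutEdges G' (blocksP C) := by
    rintro ⟨-, hstr⟩
    refine hstr U (Or.inl hU) ?_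
    intro z hz
    rcases Sym2.mem_iff.mp hz with rfl | rfl
    · exact huU
    · exact hvU
  rw [charVec_apply, if_neg hnot]

lemma M0_mem {G' : SimpleGraph V} {u v : V} (w : Sym2 V) :
    w ∈ cutEdges G' (blocksP {({u,v} : Set V)}) ↔ w ∈ G'.edgeSet ∧ w ≠ s(u,v) := by
  rw [mem_cutEdges_blocksP]
  constructor
  · rintro ⟨hwE, h⟩
    exact ⟨hwE, fun hc => h {u,v} rfl ((ends_pair_iff hwE).mpr hc)⟩
  · rintro ⟨hwE, hne⟩
    refine ⟨hwE, ?_⟩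
    rintro U hU hall
    rw [Set.mem_singleton_iff] at hU
    subst hU
    exact hne ((ends_pair_iff hwE).mp hall)

lemma single_mem_vectorSpan {G G' : SimpleGraph V}
    (hG : G.Connected) (hle : G ≤ G') {u v : V} (huv : G.Adj u v)
    (hnt : ∀ t, ¬ (G'.Adj u t ∧ G'.Adj v t)) :
    ∀ (n : ℕ) (g : Sym2 V), g ∈ G'.edgeSet → g ≠ s(u,v) → steiner G {u,v} g ≤ n →
      Pi.single g (1:ℝ) ∈ vectorSpan ℝ {x ∈ liftedVectors G G' | x s(u,v) = 0} := by
  classical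
  intro n
  induction n using Nat.strong_induction_on with
  | _ n ih =>
  intro g
  induction g using Sym2.ind with
  | _ a b =>
  intro hgE hge hgn
  set W : Set V := {u, v} with hW
  have huvne : u ≠ v := G.ne_of_adj huv
  have huvE' : s(u,v) ∈ G'.edgeSet := (G'.mem_edgeSet).mpr (hle huv)
  have hWcard : W.ncard ≤ 2 := le_of_eq (Set.ncard_pair huvne)
  have hab : a ≠ b := G'.ne_of_adj ((G'.mem_edgeSet).mp hgE)
  -- attaining set for the Steiner minimum
  have hne : (steinerSet G W s(a,b)).Nonempty := by
    refine ⟨muW W Set.univ, Set.univ, ?_, fun z _ => trivial, rfl⟩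
    rw [induce_connected_iff]
    refine ⟨⟨u, trivial⟩, fun x _ y _ => ?_⟩
    obtain ⟨q⟩ := hG.preconnected x y
    exact ⟨q, fun z _ => trivial⟩
  obtain ⟨S, hSconn, hSends, hSmu⟩ := Nat.sInf_mem hne
  have ha : a ∈ S := (sym2_mem_sub.mp hSends).1
  have hb : b ∈ S := (sym2_mem_sub.mp hSends).2
  have hgmin : steiner G W s(a,b) = muW W S := hSmu
  -- construct block set BB and multicut Mf, with the needed properties
  obtain ⟨BB, Mf, hxfF, hMfc, hSBB, hdec⟩ :
      ∃ (BB : Set V) (Mf : Set (Sym2 V)),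
        charVec Mf ∈ {x ∈ liftedVectors G G' | x s(u,v) = 0} ∧
        (∀ w, w ∈ Mf ↔ w ∈ G'.edgeSet ∧ ¬(∀ z ∈ w, z ∈ BB) ∧ w ≠ s(u,v)) ∧
        S ⊆ BB ∧
        (∀ x y : V, x ≠ y → s(x,y) ∈ G'.edgeSet → s(x,y) ≠ s(u,v) → s(x,y) ≠ s(a,b) →
          x ∈ BB → y ∈ BB → steiner G W s(x,y) < steiner G W s(a,b)) := by
    by_cases hcap : S ∩ W = ∅
    · -- Case A : S is disjoint from {u,v}
      have hdisjSW : Disjoint S W := Set.disjoint_iff_inter_eq_empty.mpr hcap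
      set C : Set (Set V) := {S, W} with hC
      have hCdisj : ∀ U ∈ C, ∀ U' ∈ C, U ≠ U' → Disjoint U U' := by
        rintro U hU U' hU' hUU'
        rcases hU with rfl | hU <;> rcases hU' with rfl | hU'
        · exact absurd rfl hUU'
        · rw [Set.mem_singleton_iff] at hU'; subst hU'; exact hdisjSW
        · rw [Set.mem_singleton_iff] at hU; subst hU; exact hdisjSW.symm
        · rw [Set.mem_singleton_iff] at hU hU'; subst hU; subst hU'; exact absurd rfl hUU'
      have hCconn : ∀ U ∈ C, (G.induce U).Connected := by
        rintro U (rfl | hU)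
        · exact hSconn
        · rw [Set.mem_singleton_iff] at hU; subst hU; exact conn_pair huv
      refine ⟨S, cutEdges G' (blocksP C), face_mem C hCdisj hCconn
        ⟨W, Set.mem_insert_of_mem _ rfl, Set.mem_insert _ _, Set.mem_insert_of_mem _ rfl⟩,
        ?_, le_refl _, ?_⟩
      · intro w
        rw [mem_cutEdges_blocksP]
        constructor
        · rintro ⟨hwE, h⟩
          exact ⟨hwE, h S (Set.mem_insert _ _),
            fun hc => h W (Set.mem_insert_of_mem _ rfl) ((ends_pair_iff hwE).mpr hc)⟩
        · rintro ⟨hwE, h1, h2⟩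
          refine ⟨hwE, ?_⟩
          rintro U (rfl | hU)
          · exact h1
          · rw [Set.mem_singleton_iff] at hU; subst hU
            intro hall
            exact h2 ((ends_pair_iff hwE).mp hall)
      · intro x y hxy hE he hg hxS hyS
        exact decrease_A hWcard hSconn ha hb hab hgmin hxS hyS hxy hg
    · -- Case B : S meets {u,v}
      have hcapne : (S ∩ W).Nonempty := Set.nonempty_iff_ne_empty.mpr hcap
      set BB : Set V := S ∪ W with hBB
      have huBB : u ∈ BB := Or.inr (Set.mem_insert _ _)
      have hvBB : v ∈ BB := Or.inr (Set.mem_insert_of_mem _ rfl)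
      have hBBconn : (G.induce BB).Connected := by
        by_cases huS : u ∈ S <;> by_cases hvS : v ∈ S
        · have : BB = S := by
            rw [hBB, hW]; ext z
            simp only [Set.mem_union, Set.mem_insert_iff, Set.mem_singleton_iff]
            constructor
            · rintro (h | rfl | rfl) <;> first | exact h | exact huS | exact hvS
            · exact Or.inl
          rw [this]; exact hSconn
        · have : BB = insert v S := by
            rw [hBB, hW]; ext z
            simp only [Set.mem_union, Set.mem_insert_iff, Set.mem_singleton_iff]
            constructor
            · rintro (h | rfl | rfl)
              · exact Or.inr h
              · exact Or.inr huS
              · exact Or.inl rfl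
            · rintro (rfl | h)
              · exact Or.inr (Or.inr rfl)
              · exact Or.inl h
          rw [this]; exact conn_insert_adj hSconn huS huv.symm
        · have : BB = insert u S := by
            rw [hBB, hW]; ext z
            simp only [Set.mem_union, Set.mem_insert_iff, Set.mem_singleton_iff]
            constructor
            · rintro (h | rfl | rfl)
              · exact Or.inr h
              · exact Or.inl rfl
              · exact Or.inr hvS
            · rintro (rfl | h)
              · exact Or.inr (Or.inl rfl)
              · exact Or.inl h
          rw [this]; exact conn_insert_adj hSconn hvS huv
        · exfalso
          obtain ⟨z, hzS, hzW⟩ := hcapne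
          rcases hzW with rfl | hzW
          · exact huS hzS
          · rw [Set.mem_singleton_iff] at hzW; subst hzW; exact hvS hzS
      set C : Set (Set V) := {BB} with hC
      have hCdisj : ∀ U ∈ C, ∀ U' ∈ C, U ≠ U' → Disjoint U U' := by
        rintro U hU U' hU' hUU'
        rw [Set.mem_singleton_iff] at hU hU'
        subst hU; subst hU'; exact absurd rfl hUU'
      have hCconn : ∀ U ∈ C, (G.induce U).Connected := by
        rintro U hU
        rw [Set.mem_singleton_iff] at hU; subst hU; exact hBBconn
      refine ⟨BB, cutEdges G' (blocksP C), face_mem C hCdisj hCconn ⟨BB, rfl, huBB, hvBB⟩,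
        ?_, Set.subset_union_left, ?_⟩
      · intro w
        rw [mem_cutEdges_blocksP]
        constructor
        · rintro ⟨hwE, h⟩
          have hBBw := h BB rfl
          refine ⟨hwE, hBBw, fun hc => hBBw ?_⟩
          subst hc
          intro z hz
          rcases Sym2.mem_iff.mp hz with rfl | rfl
          · exact huBB
          · exact hvBB
        · rintro ⟨hwE, h1, h2⟩
          refine ⟨hwE, ?_⟩
          rintro U hU
          rw [Set.mem_singleton_iff] at hU; subst hU
          exact h1
      · -- decrease dispatch in case B
        have main : ∀ p q : V, p ∉ S → q ∈ S → s(p,q) ∈ G'.edgeSet → s(p,q) ≠ s(u,v) →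
            p ∈ BB → steiner G W s(p,q) < steiner G W s(a,b) := by
          intro p q hpS hqS hpqE hpqe hpBB
          have hpW : p = u ∨ p = v := by
            rcases hpBB with h | h
            · exact absurd h hpS
            · rcases h with rfl | h
              · exact Or.inl rfl
              · rw [Set.mem_singleton_iff] at h; exact Or.inr h
          rcases hpW with hp | hp
          · -- p = u
            subst hp
            have hvS : v ∈ S := by
              obtain ⟨z, hzS, hzW⟩ := hcapne
              rcases hzW with rfl | hzW
              · exact absurd hzS hpS
              · rw [Set.mem_singleton_iff] at hzW; subst hzW; exact hzS
            have hqv : q ≠ v := by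
              rintro rfl
              exact hpqe rfl
            exact decrease_B huv hnt hSconn hpS hvS ha hb hab hgmin hgE hqS hqv hpqE
          · -- p = v
            rw [hp] at hpS hpqE hpqe ⊢
            have huS : u ∈ S := by
              obtain ⟨z, hzS, hzW⟩ := hcapne
              rcases hzW with rfl | hzW
              · exact hzS
              · rw [Set.mem_singleton_iff] at hzW; subst hzW; exact absurd hzS hpS
            have hqu : q ≠ u := by
              rintro rfl
              exact hpqe Sym2.eq_swap
            have hnt' : ∀ t, ¬ (G'.Adj v t ∧ G'.Adj u t) := fun t h => hnt t ⟨h.2, h.1⟩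
            have hgmin' : steiner G {v,u} s(a,b) = muW {v,u} S := by
              rw [Set.pair_comm v u]; exact hgmin
            have := decrease_B huv.symm hnt' hSconn hpS huS ha hb hab hgmin' hgE hqS hqu hpqE
            rw [Set.pair_comm v u] at this
            exact this
        intro x y hxy hE he hg hxBB hyBB
        by_cases hxS : x ∈ S <;> by_cases hyS : y ∈ S
        · rw [hgmin]
          exact hgmin ▸ decrease_A hWcard hSconn ha hb hab hgmin hxS hyS hxy hg
        · have hE' : s(y,x) ∈ G'.edgeSet := by rw [Sym2.eq_swap]; exact hE
          have he' : s(y,x) ≠ s(u,v) := by rw [Sym2.eq_swap]; exact he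
          have := main y x hyS hxS hE' he' hyBB
          rw [show s(y,x) = s(x,y) from Sym2.eq_swap] at this
          exact this
        · exact main x y hxS hyS hE he hxBB
        · exfalso
          have hxW : x = u ∨ x = v := by
            rcases hxBB with h | h
            · exact absurd h hxS
            · rcases h with rfl | h
              · exact Or.inl rfl
              · rw [Set.mem_singleton_iff] at h; exact Or.inr h
          have hyW : y = u ∨ y = v := by
            rcases hyBB with h | h
            · exact absurd h hyS
            · rcases h with rfl | h
              · exact Or.inl rfl
              · rw [Set.mem_singleton_iff] at h; exact Or.inr h
          rcases hxW with rfl | rfl <;> rcases hyW with rfl | rfl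
          · exact hxy rfl
          · exact he rfl
          · exact he Sym2.eq_swap
          · exact hxy rfl
  -- now the common continuation
  set F : Set (Sym2 V → ℝ) := {x ∈ liftedVectors G G' | x s(u,v) = 0} with hF
  set x0 : Sym2 V → ℝ := charVec (cutEdges G' (blocksP {({u,v} : Set V)})) with hx0
  have hx0F : x0 ∈ F :=
    face_mem {({u,v} : Set V)} (by
      rintro U hU U' hU' hUU'
      rw [Set.mem_singleton_iff] at hU hU'
      subst hU; subst hU'; exact absurd rfl hUU')
      (by rintro U hU; rw [Set.mem_singleton_iff] at hU; subst hU; exact conn_pair huv)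
      ⟨{u,v}, rfl, Set.mem_insert _ _, Set.mem_insert_of_mem _ rfl⟩
  have hd : x0 - charVec Mf ∈ vectorSpan ℝ F := by
    have := vsub_mem_vectorSpan ℝ hx0F hxfF
    rwa [vsub_eq_sub] at this
  set K : Set (Sym2 V) := {w | w ∈ G'.edgeSet ∧ w ≠ s(u,v) ∧ ∀ z ∈ w, z ∈ BB} with hK
  set Kf : Finset (Sym2 V) := K.toFinite.toFinset with hKf
  have hmemKf : ∀ w, w ∈ Kf ↔ w ∈ G'.edgeSet ∧ w ≠ s(u,v) ∧ ∀ z ∈ w, z ∈ BB := by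
    intro w
    rw [hKf, Set.Finite.mem_toFinset]
    rfl
  have hdiff : x0 - charVec Mf = ∑ h ∈ Kf, Pi.single h (1:ℝ) := by
    funext w
    rw [Pi.sub_apply, sum_single_apply]
    by_cases hwE : w ∈ G'.edgeSet
    · by_cases hwe : w = s(u,v)
      · have h1 : w ∉ cutEdges G' (blocksP {({u,v} : Set V)}) := fun hc =>
          ((M0_mem w).mp hc).2 hwe
        have h2 : w ∉ Mf := fun hc => ((hMfc w).mp hc).2.2 hwe
        have h3 : w ∉ Kf := fun hc => ((hmemKf w).mp hc).2.1 hwe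
        rw [hx0, charVec_apply, if_neg h1, charVec_apply, if_neg h2, if_neg h3]
        norm_num
      · have h1 : w ∈ cutEdges G' (blocksP {({u,v} : Set V)}) := (M0_mem w).mpr ⟨hwE, hwe⟩
        by_cases hbb : ∀ z ∈ w, z ∈ BB
        · have h2 : w ∉ Mf := fun hc => ((hMfc w).mp hc).2.1 hbb
          have h3 : w ∈ Kf := (hmemKf w).mpr ⟨hwE, hwe, hbb⟩
          rw [hx0, charVec_apply, if_pos h1, charVec_apply, if_neg h2, if_pos h3]
          norm_num
        · have h2 : w ∈ Mf := (hMfc w).mpr ⟨hwE, hbb, hwe⟩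
          have h3 : w ∉ Kf := fun hc => hbb ((hmemKf w).mp hc).2.2
          rw [hx0, charVec_apply, if_pos h1, charVec_apply, if_pos h2, if_neg h3]
          norm_num
    · have h1 : w ∉ cutEdges G' (blocksP {({u,v} : Set V)}) := fun hc => hwE hc.1
      have h2 : w ∉ Mf := fun hc => hwE ((hMfc w).mp hc).1
      have h3 : w ∉ Kf := fun hc => hwE ((hmemKf w).mp hc).1
      rw [hx0, charVec_apply, if_neg h1, charVec_apply, if_neg h2, if_neg h3]
      norm_num
  have hgK : s(a,b) ∈ Kf := (hmemKf _).mpr ⟨hgE, hge, fun z hz => hSBB (hSends z hz)⟩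
  have hsingle : Pi.single s(a,b) (1:ℝ) =
      (x0 - charVec Mf) - ∑ h ∈ Kf.erase s(a,b), Pi.single h (1:ℝ) := by
    rw [hdiff, ← Finset.add_sum_erase Kf _ hgK]
    abel
  rw [hsingle]
  refine Submodule.sub_mem _ hd (Submodule.sum_mem _ ?_)
  intro h hh
  have hhK := (hmemKf h).mp (Finset.mem_of_mem_erase hh)
  have hhg : h ≠ s(a,b) := Finset.ne_of_mem_erase hh
  obtain ⟨hhE, hhe, hhBB⟩ := hhK
  revert hhE hhe hhBB hhg
  induction h using Sym2.ind with
  | _ x y =>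
  intro hhg hhE hhe hhBB
  have hxyne : x ≠ y := G'.ne_of_adj ((G'.mem_edgeSet).mp hhE)
  have hxBB : x ∈ BB := hhBB x (by simp)
  have hyBB : y ∈ BB := hhBB y (by simp)
  have hlt : steiner G W s(x,y) < steiner G W s(a,b) :=
    hdec x y hxyne hhE hhe hhg hxBB hyBB
  exact ih (steiner G W s(x,y)) (lt_of_lt_of_le hlt hgn) s(x,y) hhE hhe (le_refl _)


lemma sum_smul_single_apply (c : Sym2 V → ℝ) (T : Finset (Sym2 V)) (w : Sym2 V) :
    (∑ h ∈ T, c h • (Pi.single h (1:ℝ) : Sym2 V → ℝ)) w = if w ∈ T then c w else 0 := by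
  classical
  rw [Finset.sum_apply]
  have : ∀ h ∈ T, (c h • (Pi.single h (1:ℝ) : Sym2 V → ℝ)) w
      = if h = w then (c h) else (0:ℝ) := by
    intro h _
    rw [Pi.smul_apply, Pi.single_apply]
    rcases eq_or_ne w h with rfl | hh
    · simp
    · rw [if_neg hh, if_neg (Ne.symm hh)]
      simp
  rw [Finset.sum_congr rfl this, Finset.sum_ite_eq' T w c]

lemma lifted_nonneg {G G' : SimpleGraph V} {x : Sym2 V → ℝ} (hx : x ∈ liftedVectors G G')
    (w : Sym2 V) : 0 ≤ x w := by
  classical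
  obtain ⟨M, -, rfl⟩ := hx
  rw [charVec_apply]
  split_ifs <;> norm_num

lemma lifted_subset {G G' : SimpleGraph V} {x : Sym2 V → ℝ} (hx : x ∈ liftedVectors G G')
    {w : Sym2 V} (hw : w ∉ G'.edgeSet) : x w = 0 := by
  classical
  obtain ⟨M, ⟨P, -, rfl⟩, rfl⟩ := hx
  rw [charVec_apply, if_neg]
  exact fun hc => hw hc.1

lemma face_coord_eq {G G' : SimpleGraph V} {u v t : V} (huvE : s(u,v) ∈ G'.edgeSet)
    (h1 : G'.Adj u t) (h2 : G'.Adj v t) {x : Sym2 V → ℝ}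
    (hx : x ∈ liftedVectors G G') (hxe : x s(u,v) = 0) :
    x s(u,t) = x s(v,t) := by
  classical
  obtain ⟨M, ⟨P, hP, rfl⟩, rfl⟩ := hx
  have heM : s(u,v) ∉ cutEdges G' P := by
    intro hc
    rw [charVec_apply, if_pos hc] at hxe
    exact one_ne_zero hxe
  have hnstr : ¬ Straddles P s(u,v) := fun hstr => heM ⟨huvE, hstr⟩
  unfold Straddles at hnstr
  push_neg at hnstr
  obtain ⟨U, hU, hUe⟩ := hnstr
  have huU : u ∈ U := hUe u (by simp)
  have hvU : v ∈ U := hUe v (by simp)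
  have hiff : ∀ p, p ∈ U → (Straddles P s(p,t) ↔ t ∉ U) := by
    intro p hp
    constructor
    · intro hst ht
      refine hst U hU ?_
      intro z hz
      rcases Sym2.mem_iff.mp hz with rfl | rfl
      · exact hp
      · exact ht
    · intro ht U' hU' hall
      have hpU' : p ∈ U' := hall p (by simp)
      have htU' : t ∈ U' := hall t (by simp)
      have hUU : U' = U := by
        by_contra hne
        exact Set.disjoint_left.mp (hP.1 U' hU' U hU hne) hpU' hp
      exact ht (hUU ▸ htU')
  by_cases ht : t ∈ U
  · have hm1 : s(u,t) ∉ cutEdges G' P := fun hc => ((hiff u huU).mp hc.2) ht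
    have hm2 : s(v,t) ∉ cutEdges G' P := fun hc => ((hiff v hvU).mp hc.2) ht
    rw [charVec_apply, if_neg hm1, charVec_apply, if_neg hm2]
  · have hm1 : s(u,t) ∈ cutEdges G' P := ⟨(G'.mem_edgeSet).mpr h1, (hiff u huU).mpr ht⟩
    have hm2 : s(v,t) ∈ cutEdges G' P := ⟨(G'.mem_edgeSet).mpr h2, (hiff v hvU).mpr ht⟩
    rw [charVec_apply, if_pos hm1, charVec_apply, if_pos hm2]

end Main

end AuxLemmas

/-- For `e ∈ E`, the inequality `0 ≤ x_e` defines a facet of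
`Ξ_{GG'}` iff `e` is contained in no triangle of `G'`. -/
theorem box_lower_facet_tree_edge [Fintype V] [DecidableEq V]
    (G G' : SimpleGraph V) (hG : G.Connected) (hle : G ≤ G')
    (e : Sym2 V) (he : e ∈ G.edgeSet) :
    DefinesFacet G G' (fun x => 0 ≤ x e) (fun x => x e = 0) ↔
      ¬ ∃ u v t : V, e = s(u, v) ∧ G'.Adj u t ∧ G'.Adj v t := by
  classical
  revert he
  induction e using Sym2.ind with
  | _ u v =>
  intro he
  have huv : G.Adj u v := (G.mem_edgeSet).mp he
  have huvne : u ≠ v := G.ne_of_adj huv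
  have huvE' : s(u,v) ∈ G'.edgeSet := (G'.mem_edgeSet).mpr (hle huv)
  set F : Set (Sym2 V → ℝ) := {x ∈ liftedVectors G G' | x s(u,v) = 0} with hF
  have hEfin : (G'.edgeSet).Finite := Set.toFinite _
  set n : ℕ := G'.edgeSet.ncard with hn
  have hface_supp : ∀ z ∈ F, ∀ w, w ∉ G'.edgeSet → z w = 0 :=
    fun z hz w hw => lifted_subset hz.1 hw
  constructor
  · -- facet → no triangle
    intro hDF htri
    obtain ⟨u', v', t, heq, h1, h2⟩ := htri
    have hfd : Module.finrank ℝ (vectorSpan ℝ F) = n - 1 := hDF.2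
    clear hDF
    have hu'v' : G.Adj u' v' := (G.mem_edgeSet).mp (heq ▸ he)
    have hu'v'ne : u' ≠ v' := G.ne_of_adj hu'v'
    have hu't : u' ≠ t := G'.ne_of_adj h1
    have hv't : v' ≠ t := G'.ne_of_adj h2
    set g1 : Sym2 V := s(u', t) with hg1
    set g2 : Sym2 V := s(v', t) with hg2
    have hg1E : g1 ∈ G'.edgeSet := (G'.mem_edgeSet).mpr h1
    have hg2E : g2 ∈ G'.edgeSet := (G'.mem_edgeSet).mpr h2
    have he'E : s(u',v') ∈ G'.edgeSet := heq ▸ huvE'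
    have heg1 : s(u',v') ≠ g1 := by
      intro hc
      rw [hg1, Sym2.eq_iff] at hc
      rcases hc with ⟨-, hc⟩ | ⟨hc, -⟩
      · exact hv't hc
      · exact hu't hc
    have heg2 : s(u',v') ≠ g2 := by
      intro hc
      rw [hg2, Sym2.eq_iff] at hc
      rcases hc with ⟨hc, -⟩ | ⟨hc, -⟩
      · exact hu'v'ne hc
      · exact hu't hc
    have hg12 : g1 ≠ g2 := by
      intro hc
      rw [hg1, hg2, Sym2.eq_iff] at hc
      rcases hc with ⟨hc, -⟩ | ⟨hc, -⟩
      · exact hu'v'ne hc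
      · exact hu't hc
    have hsub3 : ({s(u',v'), g1, g2} : Set (Sym2 V)) ⊆ G'.edgeSet := by
      rintro z (rfl | rfl | hz)
      · exact he'E
      · exact hg1E
      · rw [Set.mem_singleton_iff] at hz; subst hz; exact hg2E
    have hcard3 : ({s(u',v'), g1, g2} : Set (Sym2 V)).ncard = 3 := by
      rw [Set.ncard_insert_of_notMem (by
        rintro (hc | hc)
        · exact heg1 hc
        · rw [Set.mem_singleton_iff] at hc; exact heg2 hc) (Set.toFinite _),
        Set.ncard_pair hg12]
    have h3n : 3 ≤ n := by
      rw [hn, ← hcard3]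
      exact Set.ncard_le_ncard hsub3 hEfin
    set A3 : Finset (Sym2 V) :=
      (G'.edgeSet \ {s(u',v'), g1, g2}).toFinite.toFinset with hA3
    have hA3mem : ∀ w, w ∈ A3 ↔ w ∈ G'.edgeSet ∧ ¬(w = s(u',v') ∨ w = g1 ∨ w = g2) := by
      intro w
      rw [hA3, Set.Finite.mem_toFinset, Set.mem_diff]
      simp [Set.mem_insert_iff]
    have hA3card : A3.card = n - 3 := by
      rw [hA3, ← Set.ncard_eq_toFinset_card, Set.ncard_diff hsub3, hcard3]
    set Z : Sym2 V → ℝ := Pi.single g1 (1:ℝ) + Pi.single g2 (1:ℝ) with hZ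
    set Bf : Finset (Sym2 V → ℝ) :=
      insert Z (A3.image (fun g => (Pi.single g (1:ℝ) : Sym2 V → ℝ))) with hBf
    have hface_e0 : ∀ z ∈ F, z s(u',v') = 0 := by
      intro z hz
      rw [← heq]
      exact hz.2
    have hface_rel : ∀ z ∈ F, z g1 = z g2 :=
      fun z hz => face_coord_eq he'E h1 h2 hz.1 (hface_e0 z hz)
    have hZval : ∀ w, Z w = (if w = g1 then (1:ℝ) else 0) + (if w = g2 then (1:ℝ) else 0) := by
      intro w
      rw [hZ, Pi.add_apply, Pi.single_apply, Pi.single_apply]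
    have hspan : vectorSpan ℝ F ≤ Submodule.span ℝ (Bf : Set (Sym2 V → ℝ)) := by
      rw [vectorSpan_def, Submodule.span_le]
      rintro y ⟨y1, hy1, y2, hy2, rfl⟩
      change y1 - y2 ∈ _
      have heqy : y1 - y2 = (∑ h ∈ A3, (y1 h - y2 h) • (Pi.single h (1:ℝ) : Sym2 V → ℝ))
          + (y1 g1 - y2 g1) • Z := by
        funext w
        rw [Pi.add_apply, Pi.sub_apply, sum_smul_single_apply, Pi.smul_apply, hZval w,
          smul_eq_mul]
        by_cases hwA : w ∈ A3
        · have hw3 := (hA3mem w).mp hwA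
          push_neg at hw3
          rw [if_pos hwA, if_neg hw3.2.2.1, if_neg hw3.2.2.2]
          ring
        · rw [if_neg hwA]
          by_cases hw1 : w = g1
          · rw [if_pos hw1, if_neg (by rw [hw1]; exact hg12), hw1]
            ring
          · by_cases hw2 : w = g2
            · rw [if_neg hw1, if_pos hw2, hw2, ← hface_rel y1 hy1, ← hface_rel y2 hy2]
              ring
            · rw [if_neg hw1, if_neg hw2]
              have hw0 : y1 w - y2 w = 0 := by
                by_cases hwE : w ∈ G'.edgeSet
                · have hwe : w = s(u',v') := by
                    by_contra hwe
                    exact hwA ((hA3mem w).mpr ⟨hwE, by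
                      rintro (hc | hc | hc)
                      · exact hwe hc
                      · exact hw1 hc
                      · exact hw2 hc⟩)
                  rw [hwe, hface_e0 y1 hy1, hface_e0 y2 hy2]
                  ring
                · rw [hface_supp y1 hy1 w hwE, hface_supp y2 hy2 w hwE]
                  ring
              rw [hw0]
              ring
      rw [heqy]
      refine Submodule.add_mem _ (Submodule.sum_mem _ fun h hh => Submodule.smul_mem _ _
        (Submodule.subset_span (Finset.mem_coe.mpr
          (Finset.mem_insert_of_mem (Finset.mem_image_of_mem _ hh)))))
        (Submodule.smul_mem _ _ (Submodule.subset_span (Finset.mem_coe.mpr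
          (Finset.mem_insert_self _ _))))
    have hrank : Module.finrank ℝ (vectorSpan ℝ F) ≤ Bf.card :=
      le_trans (Submodule.finrank_mono hspan) (finrank_span_finset_le_card Bf)
    have hBfcard : Bf.card ≤ n - 2 := by
      have hc1 := Finset.card_insert_le Z (A3.image (fun g => (Pi.single g (1:ℝ) : Sym2 V → ℝ)))
      have hc2 := Finset.card_image_le (s := A3)
        (f := fun g => (Pi.single g (1:ℝ) : Sym2 V → ℝ))
      have hc1' : Bf.card ≤ (A3.image (fun g => (Pi.single g (1:ℝ) : Sym2 V → ℝ))).card + 1 := hc1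
      clear * - hc1' hc2 hA3card h3n
      omega
    have hle2 : n - 1 ≤ n - 2 := hfd ▸ le_trans hrank hBfcard
    clear * - hle2 h3n
    omega
  · -- no triangle → facet
    intro hnt
    have hnt' : ∀ t, ¬ (G'.Adj u t ∧ G'.Adj v t) := fun t h => hnt ⟨u, v, t, rfl, h.1, h.2⟩
    refine ⟨fun x hx => lifted_nonneg hx _, ?_⟩
    set A : Finset (Sym2 V) := (G'.edgeSet \ {s(u,v)}).toFinite.toFinset with hA
    have hAmem : ∀ w, w ∈ A ↔ w ∈ G'.edgeSet ∧ w ≠ s(u,v) := by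
      intro w
      rw [hA, Set.Finite.mem_toFinset, Set.mem_diff, Set.mem_singleton_iff]
    have hAcard : A.card = n - 1 := by
      rw [hA, ← Set.ncard_eq_toFinset_card, Set.ncard_diff_singleton_of_mem huvE']
    set T : Finset (Sym2 V → ℝ) := A.image (fun g => (Pi.single g (1:ℝ) : Sym2 V → ℝ)) with hT
    have hspanU : vectorSpan ℝ F ≤ Submodule.span ℝ (T : Set (Sym2 V → ℝ)) := by
      rw [vectorSpan_def, Submodule.span_le]
      rintro y ⟨y1, hy1, y2, hy2, rfl⟩
      change y1 - y2 ∈ _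
      have heqy : y1 - y2 = ∑ h ∈ A, (y1 h - y2 h) • (Pi.single h (1:ℝ) : Sym2 V → ℝ) := by
        funext w
        rw [Pi.sub_apply, sum_smul_single_apply]
        by_cases hwA : w ∈ A
        · rw [if_pos hwA]
        · rw [if_neg hwA]
          by_cases hwE : w ∈ G'.edgeSet
          · have hwe : w = s(u,v) := by
              by_contra hc
              exact hwA ((hAmem w).mpr ⟨hwE, hc⟩)
            rw [hwe, hy1.2, hy2.2]
            ring
          · rw [hface_supp y1 hy1 w hwE, hface_supp y2 hy2 w hwE]
            ring
      rw [heqy]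
      exact Submodule.sum_mem _ fun h hh => Submodule.smul_mem _ _
        (Submodule.subset_span (Finset.mem_coe.mpr (Finset.mem_image_of_mem _ hh)))
    have hup : Module.finrank ℝ (vectorSpan ℝ F) ≤ A.card :=
      le_trans (le_trans (Submodule.finrank_mono hspanU) (finrank_span_finset_le_card T))
        (Finset.card_image_le)
    -- lower bound
    have hsingleW : ∀ w ∈ A, (Pi.single w (1:ℝ) : Sym2 V → ℝ) ∈ vectorSpan ℝ F := by
      intro w hw
      obtain ⟨hwE, hwe⟩ := (hAmem w).mp hw
      exact single_mem_vectorSpan hG hle huv hnt' (steiner G {u,v} w) w hwE hwe (le_refl _)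
    set b : ↥A → (Sym2 V → ℝ) := fun i => Pi.single i.1 (1:ℝ) with hb
    have hli : LinearIndependent ℝ b := by
      have key := (Pi.basisFun ℝ (Sym2 V)).linearIndependent.comp
        (fun i : ↥A => (i : Sym2 V)) Subtype.val_injective
      have key2 : LinearIndependent ℝ (fun i : ↥A => (Pi.basisFun ℝ (Sym2 V)) ↑i) := key
      have heqb : (fun i : ↥A => (Pi.basisFun ℝ (Sym2 V)) ↑i) = b := by
        funext i
        rw [hb, Pi.basisFun_apply]
      rwa [heqb] at key2
    have hosp : Submodule.span ℝ (Set.range b) ≤ vectorSpan ℝ F := by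
      rw [Submodule.span_le]
      rintro z ⟨i, rfl⟩
      exact hsingleW i.1 i.2
    have hlow : A.card ≤ Module.finrank ℝ (vectorSpan ℝ F) := by
      have hmono := Submodule.finrank_mono hosp
      rw [finrank_span_eq_card hli, Fintype.card_coe] at hmono
      exact hmono
    show Module.finrank ℝ (vectorSpan ℝ {x ∈ liftedVectors G G' | x s(u,v) = 0}) = G'.edgeSet.ncard - 1
    have hAcard' : A.card = G'.edgeSet.ncard - 1 := hAcard
    exact le_antisymm (hAcard' ▸ hup) (hAcard' ▸ hlow)
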